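/- For a complex polynomial C(t) = Σ_i a_i t^i and a real number R > 0, set ‖C‖_R = Σ_i |a_i| R^i. Let L(ζ) = Σ_{j=0}^{ℓ} A_j ζ^j be a complex polynomial with A_ℓ ≠ 0, and let R > 0 and c ≥ 0 satisfy c < R. Then there exist α > 0 and M > 0 such that for every μ ∈ ℂ with |μ| ≥ M and every complex polynomial C with deg C ≤ c·|μ|, one has ‖Δ^ℓ C‖_R ≤ α·‖Σ_{j=0}^{ℓ} A_j Δ^j C‖_R, where Δ v = μ·v + dv/dt. -/

import Mathlib

/-- The weighted `ℓ¹`-norm on complex polynomials: for `C(t) = Σ_i a_i t^i`,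
`‖C‖_R = Σ_i |a_i| R^i`. -/
noncomputable def normR (R : ℝ) (C : Polynomial ℂ) : ℝ :=
  ∑ i ∈ C.support, ‖C.coeff i‖ * R ^ i

/-- The operator `Δ v = μ·v + dv/dt` on `ℂ[t]`. -/
noncomputable def DeltaOp (μ : ℂ) (v : Polynomial ℂ) : Polynomial ℂ :=
  Polynomial.C μ * v + Polynomial.derivative v

open Polynomial Finset

lemma normR_eq_range (R : ℝ) (p : Polynomial ℂ) {n : ℕ} (h : p.natDegree < n) :
    normR R p = ∑ i ∈ Finset.range n, ‖p.coeff i‖ * R ^ i := by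
  rw [normR]
  apply Finset.sum_subset
  · exact fun i hi => Finset.mem_range.mpr
      (lt_of_le_of_lt (Polynomial.le_natDegree_of_mem_supp i hi) h)
  · intro i _ hi
    rw [Polynomial.notMem_support_iff.mp hi]; simp

lemma normR_nonneg (R : ℝ) (hR : 0 ≤ R) (p : Polynomial ℂ) : 0 ≤ normR R p :=
  Finset.sum_nonneg fun i _ => mul_nonneg (norm_nonneg _) (pow_nonneg hR i)

lemma normR_zero (R : ℝ) : normR R 0 = 0 := by simp [normR]

lemma normR_smul (R : ℝ) (a : ℂ) (p : Polynomial ℂ) :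
    normR R (a • p) = ‖a‖ * normR R p := by
  rw [normR_eq_range R (a • p)
    (lt_of_le_of_lt (Polynomial.natDegree_smul_le a p) (Nat.lt_succ_self _)),
    normR_eq_range R p (Nat.lt_succ_self _), Finset.mul_sum]
  refine Finset.sum_congr rfl fun i _ => ?_
  simp [Polynomial.coeff_smul, smul_eq_mul, map_mul, mul_assoc]

lemma normR_neg (R : ℝ) (p : Polynomial ℂ) : normR R (-p) = normR R p := by
  simp [normR, Polynomial.support_neg]

lemma normR_add_le (R : ℝ) (hR : 0 ≤ R) (p q : Polynomial ℂ) :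
    normR R (p + q) ≤ normR R p + normR R q := by
  set n := max p.natDegree q.natDegree + 1 with hn
  have hp : p.natDegree < n := lt_of_le_of_lt (le_max_left _ _) (Nat.lt_succ_self _)
  have hq : q.natDegree < n := lt_of_le_of_lt (le_max_right _ _) (Nat.lt_succ_self _)
  have hpq : (p + q).natDegree < n :=
    lt_of_le_of_lt (Polynomial.natDegree_add_le p q) (Nat.lt_succ_self _)
  rw [normR_eq_range R _ hpq, normR_eq_range R p hp, normR_eq_range R q hq,
    ← Finset.sum_add_distrib]
  refine Finset.sum_le_sum fun i _ => ?_
  rw [Polynomial.coeff_add, ← add_mul]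
  exact mul_le_mul_of_nonneg_right (norm_add_le _ _) (pow_nonneg hR i)

lemma normR_sum_le (R : ℝ) (hR : 0 ≤ R) (s : Finset ℕ) (f : ℕ → Polynomial ℂ) :
    normR R (∑ j ∈ s, f j) ≤ ∑ j ∈ s, normR R (f j) := by
  classical
  induction s using Finset.induction with
  | empty => simp [normR_zero]
  | insert _ _ h ih =>
    rw [Finset.sum_insert h, Finset.sum_insert h]
    exact le_trans (normR_add_le R hR _ _) (by linarith)

lemma normR_deriv_le (R : ℝ) (hR : 0 < R) (p : Polynomial ℂ) :
    normR R (Polynomial.derivative p) ≤ ((p.natDegree : ℝ) / R) * normR R p := by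
  rcases Nat.eq_zero_or_pos p.natDegree with h0 | hd
  · obtain ⟨a, rfl⟩ := Polynomial.natDegree_eq_zero.mp h0
    simp [normR_zero, mul_nonneg, div_nonneg, hR.le,
      normR_nonneg R hR.le (Polynomial.C a)]
  · set d := p.natDegree with hdd
    have hder : (Polynomial.derivative p).natDegree < d :=
      lt_of_le_of_lt (Polynomial.natDegree_derivative_le p) (Nat.sub_lt hd one_pos)
    rw [normR_eq_range R _ hder]
    calc ∑ i ∈ Finset.range d, ‖(Polynomial.derivative p).coeff i‖ * R ^ i
        ≤ ∑ i ∈ Finset.range d, ((d : ℝ) / R) * (‖p.coeff (i + 1)‖ * R ^ (i + 1)) := by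
          refine Finset.sum_le_sum fun i hi => ?_
          rw [Polynomial.coeff_derivative, norm_mul]
          have h1 : ((i : ℝ) + 1) ≤ d := by
            exact_mod_cast Nat.succ_le_of_lt (Finset.mem_range.mp hi)
          have habs : ‖(i : ℂ) + 1‖ = (i : ℝ) + 1 := by
            rw [show ((i : ℂ) + 1) = ((i + 1 : ℕ) : ℂ) by push_cast; ring,
              Complex.norm_natCast]; push_cast; ring
          rw [habs]
          have hRp : (0:ℝ) < R ^ i := pow_nonneg hR.le i |>.lt_of_ne' (by positivity)
          have key : ((d : ℝ) / R) * (‖p.coeff (i + 1)‖ * R ^ (i + 1))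
              = (d : ℝ) * (‖p.coeff (i + 1)‖ * R ^ i) := by
            field_simp; ring
          rw [key]
          nlinarith [mul_nonneg (mul_nonneg (sub_nonneg.mpr h1) (norm_nonneg (p.coeff (i+1)))) hRp.le]
      _ = ((d : ℝ) / R) * ∑ i ∈ Finset.range d, ‖p.coeff (i + 1)‖ * R ^ (i + 1) := by
          rw [Finset.mul_sum]
      _ ≤ ((d : ℝ) / R) * normR R p := by
          refine mul_le_mul_of_nonneg_left ?_ (div_nonneg (Nat.cast_nonneg d) hR.le)
          rw [normR_eq_range R p (Nat.lt_succ_self d), Finset.sum_range_succ']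
          exact le_add_of_nonneg_right (by positivity)

lemma natDegree_delta_le (μ : ℂ) (v : Polynomial ℂ) :
    (DeltaOp μ v).natDegree ≤ v.natDegree :=
  le_trans (Polynomial.natDegree_add_le _ _)
    (max_le (Polynomial.natDegree_C_mul_le _ _)
      (le_trans (Polynomial.natDegree_derivative_le v) (Nat.sub_le _ _)))

lemma natDegree_delta_iter_le (μ : ℂ) (k : ℕ) (v : Polynomial ℂ) :
    ((DeltaOp μ)^[k] v).natDegree ≤ v.natDegree := by
  induction k generalizing v with
  | zero => simp
  | succ k ih =>
    rw [Function.iterate_succ_apply]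
    exact le_trans (ih _) (natDegree_delta_le μ v)

lemma delta_lower (R : ℝ) (hR : 0 < R) (μ : ℂ) (v : Polynomial ℂ) :
    ‖μ‖ * normR R v - ((v.natDegree : ℝ) / R) * normR R v ≤
      normR R (DeltaOp μ v) := by
  have h1 : normR R (Polynomial.C μ * v) = ‖μ‖ * normR R v := by
    rw [← Polynomial.smul_eq_C_mul, normR_smul]
  have h2 : Polynomial.C μ * v = DeltaOp μ v + -(Polynomial.derivative v) := by
    rw [DeltaOp]; ring
  have h4 := normR_deriv_le R hR v
  have h5 : ‖μ‖ * normR R v ≤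
      normR R (DeltaOp μ v) + normR R (Polynomial.derivative v) := by
    rw [← h1, h2]
    have h3 := normR_add_le R hR.le (DeltaOp μ v) (-(Polynomial.derivative v))
    rwa [normR_neg] at h3
  linarith

lemma iter_lower (R : ℝ) (hR : 0 < R) (c : ℝ) (μ : ℂ)
    (hε : 0 ≤ (1 - c / R) * ‖μ‖) (k : ℕ) (v : Polynomial ℂ)
    (hdeg : (v.natDegree : ℝ) ≤ c * ‖μ‖) :
    ((1 - c / R) * ‖μ‖) ^ k * normR R v ≤ normR R ((DeltaOp μ)^[k] v) := by
  induction k generalizing v with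
  | zero => simp
  | succ k ih =>
    rw [Function.iterate_succ_apply]
    have hd : ((DeltaOp μ v).natDegree : ℝ) ≤ c * ‖μ‖ :=
      le_trans (Nat.cast_le.mpr (natDegree_delta_le μ v)) hdeg
    have h1 := ih (DeltaOp μ v) hd
    have h2 : (1 - c / R) * ‖μ‖ * normR R v ≤ normR R (DeltaOp μ v) := by
      have hl := delta_lower R hR μ v
      have hnn := normR_nonneg R hR.le v
      have hdd : ((v.natDegree : ℝ) / R) * normR R v ≤
          (c * ‖μ‖ / R) * normR R v :=
        mul_le_mul_of_nonneg_right ((div_le_div_iff_of_pos_right hR).mpr hdeg) hnn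
      have : (1 - c / R) * ‖μ‖ * normR R v =
          ‖μ‖ * normR R v - (c * ‖μ‖ / R) * normR R v := by ring
      linarith
    calc ((1 - c / R) * ‖μ‖) ^ (k + 1) * normR R v
        = ((1 - c / R) * ‖μ‖) ^ k * ((1 - c / R) * ‖μ‖ * normR R v) := by
          ring
      _ ≤ ((1 - c / R) * ‖μ‖) ^ k * normR R (DeltaOp μ v) :=
          mul_le_mul_of_nonneg_left h2 (pow_nonneg hε k)
      _ ≤ _ := h1

/-- For `L(ζ) = Σ_{j≤ℓ} A_j ζ^j` with `A_ℓ ≠ 0`, `R > 0` and `0 ≤ c < R`, there are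
`α > 0` and `M > 0` such that for every `μ` with `|μ| ≥ M` and every polynomial `C` with
`deg C ≤ c|μ|`: `‖Δ^ℓ C‖_R ≤ α·‖Σ_j A_j Δ^j C‖_R`, where `Δ v = μ v + v'`. -/
theorem iterate_delta_le_L (R : ℝ) (hR : 0 < R) (ℓ : ℕ) (A : ℕ → ℂ) (hA : A ℓ ≠ 0)
    (c : ℝ) (hc0 : 0 ≤ c) (hcR : c < R) :
    ∃ α > (0 : ℝ), ∃ M > (0 : ℝ), ∀ μ : ℂ, M ≤ ‖μ‖ →
      ∀ C : Polynomial ℂ, (C.natDegree : ℝ) ≤ c * ‖μ‖ →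
        normR R ((DeltaOp μ)^[ℓ] C) ≤
          α * normR R (∑ j ∈ Finset.range (ℓ + 1), A j • (DeltaOp μ)^[j] C) := by
  obtain ⟨a, ha_def⟩ : ∃ a : ℝ, a = ‖A ℓ‖ := ⟨_, rfl⟩
  have ha : 0 < a := ha_def ▸ norm_pos_iff.mpr hA
  obtain ⟨ε, hε_def⟩ : ∃ ε : ℝ, ε = 1 - c / R := ⟨_, rfl⟩
  have hε : 0 < ε := by
    have h : c / R < 1 := (div_lt_one hR).mpr hcR
    rw [hε_def]; linarith
  obtain ⟨S, hS_def⟩ : ∃ S : ℝ, S = ∑ j ∈ Finset.range ℓ, ‖A j‖ := ⟨_, rfl⟩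
  have hS : 0 ≤ S := hS_def ▸ Finset.sum_nonneg fun j _ => norm_nonneg _
  refine ⟨2 / a, by positivity, max 1 ((1 + 2 * S / a) / ε),
    lt_of_lt_of_le one_pos (le_max_left _ _), ?_⟩
  intro μ hμ C hC
  obtain ⟨N, hN_def⟩ : ∃ N : ℝ, N = normR R ((DeltaOp μ)^[ℓ] C) := ⟨_, rfl⟩
  have hNnn : 0 ≤ N := hN_def ▸ normR_nonneg R hR.le _
  have hμ1 : (1 : ℝ) ≤ ‖μ‖ := le_trans (le_max_left _ _) hμ
  have hSa : 0 ≤ 2 * S / a := by positivity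
  have hεμ : 1 + 2 * S / a ≤ ε * ‖μ‖ := by
    have h1 : (1 + 2 * S / a) / ε ≤ ‖μ‖ := le_trans (le_max_right _ _) hμ
    calc 1 + 2 * S / a = ε * ((1 + 2 * S / a) / ε) := by field_simp
      _ ≤ ε * ‖μ‖ := mul_le_mul_of_nonneg_left h1 hε.le
  have hεμ1 : (1 : ℝ) ≤ ε * ‖μ‖ := le_trans (by linarith) hεμ
  have hεμ0 : (0 : ℝ) ≤ ε * ‖μ‖ := le_trans zero_le_one hεμ1
  have key : ∀ j, j < ℓ → ε * ‖μ‖ * normR R ((DeltaOp μ)^[j] C) ≤ N := by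
    intro j hj
    have hdegj : (((DeltaOp μ)^[j] C).natDegree : ℝ) ≤ c * ‖μ‖ :=
      le_trans (Nat.cast_le.mpr (natDegree_delta_iter_le μ j C)) hC
    have h1 := hε_def ▸ iter_lower R hR c μ (hε_def ▸ hεμ0) (ℓ - j) ((DeltaOp μ)^[j] C) hdegj
    rw [← Function.iterate_add_apply, Nat.sub_add_cancel hj.le] at h1
    have h2 : ε * ‖μ‖ ≤ (ε * ‖μ‖) ^ (ℓ - j) :=
      le_self_pow₀ hεμ1 (Nat.sub_ne_zero_of_lt hj)
    have hnnj : 0 ≤ normR R ((DeltaOp μ)^[j] C) := normR_nonneg R hR.le _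
    calc ε * ‖μ‖ * normR R ((DeltaOp μ)^[j] C)
        ≤ (ε * ‖μ‖) ^ (ℓ - j) * normR R ((DeltaOp μ)^[j] C) :=
          mul_le_mul_of_nonneg_right h2 hnnj
      _ ≤ N := hN_def ▸ h1
  obtain ⟨T, hT_def⟩ : ∃ T : ℝ,
      T = ∑ j ∈ Finset.range ℓ, ‖A j‖ * normR R ((DeltaOp μ)^[j] C) := ⟨_, rfl⟩
  have hT : 0 ≤ T := hT_def ▸ Finset.sum_nonneg fun j _ =>
    mul_nonneg (norm_nonneg _) (normR_nonneg R hR.le _)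
  have hεμ' : a + 2 * S ≤ a * (ε * ‖μ‖) := by
    have h := mul_le_mul_of_nonneg_left hεμ ha.le
    have hfs : a * (1 + 2 * S / a) = a + 2 * S := by field_simp
    linarith [hfs ▸ h]
  have hmid : (ε * ‖μ‖) * T ≤ S * N := by
    rw [hT_def, hS_def]
    calc (ε * ‖μ‖) * ∑ j ∈ Finset.range ℓ,
          ‖A j‖ * normR R ((DeltaOp μ)^[j] C)
        = ∑ j ∈ Finset.range ℓ, ‖A j‖ *
            (ε * ‖μ‖ * normR R ((DeltaOp μ)^[j] C)) := by
          rw [Finset.mul_sum]; exact Finset.sum_congr rfl fun j _ => by ring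
      _ ≤ ∑ j ∈ Finset.range ℓ, ‖A j‖ * N :=
          Finset.sum_le_sum fun j hj =>
            mul_le_mul_of_nonneg_left (key j (Finset.mem_range.mp hj))
              (norm_nonneg _)
      _ = (∑ j ∈ Finset.range ℓ, ‖A j‖) * N := by rw [Finset.sum_mul]
  have hTle' : (a + 2 * S) * T ≤ a * (S * N) :=
    calc (a + 2 * S) * T ≤ (a * (ε * ‖μ‖)) * T :=
          mul_le_mul_of_nonneg_right hεμ' hT
      _ = a * ((ε * ‖μ‖) * T) := by ring
      _ ≤ a * (S * N) := mul_le_mul_of_nonneg_left hmid ha.le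
  have ha2S : (0:ℝ) < a + 2 * S := by linarith
  have hT2 : 2 * T ≤ a * N := by
    nlinarith [hTle', mul_nonneg (mul_nonneg ha.le ha.le) hNnn, ha2S, hT, hNnn]
  have htri : a * N ≤
      normR R (∑ j ∈ Finset.range (ℓ + 1), A j • (DeltaOp μ)^[j] C) + T := by
    have hsplit : A ℓ • (DeltaOp μ)^[ℓ] C =
        (∑ j ∈ Finset.range (ℓ + 1), A j • (DeltaOp μ)^[j] C) +
          -(∑ j ∈ Finset.range ℓ, A j • (DeltaOp μ)^[j] C) := by
      rw [Finset.sum_range_succ]; ring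
    have h1 : normR R (A ℓ • (DeltaOp μ)^[ℓ] C) = a * N := by
      rw [normR_smul, ← ha_def, ← hN_def]
    have h2 := normR_add_le R hR.le
      (∑ j ∈ Finset.range (ℓ + 1), A j • (DeltaOp μ)^[j] C)
      (-(∑ j ∈ Finset.range ℓ, A j • (DeltaOp μ)^[j] C))
    rw [normR_neg] at h2
    have h3 : normR R (∑ j ∈ Finset.range ℓ, A j • (DeltaOp μ)^[j] C) ≤ T := by
      refine le_trans (normR_sum_le R hR.le _ _) ?_
      rw [hT_def]
      exact Finset.sum_le_sum fun j _ => le_of_eq (normR_smul R _ _)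
    calc a * N = normR R (A ℓ • (DeltaOp μ)^[ℓ] C) := h1.symm
      _ ≤ _ := by rw [hsplit]; linarith
  have hL : 0 ≤ normR R (∑ j ∈ Finset.range (ℓ + 1), A j • (DeltaOp μ)^[j] C) :=
    normR_nonneg R hR.le _
  rw [← hN_def, div_mul_eq_mul_div, le_div_iff₀ ha]
  linarith
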